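/- A skew-symmetrizable matrix B ∈ M_n(ℝ) is of quasi-integer type if and only if Sk(B) = D^{1/2} B D^{-1/2} is of quasi-integer type (where D is any skew-symmetrizer of B). Moreover, the set of skew-symmetric matrices of quasi-integer type equals { Sk(B) : B ∈ M_n(ℤ) integer skew-symmetrizable }. -/

import Mathlib

open Matrix

noncomputable section

/-- A real matrix `B` is of quasi-integer type if `H B H⁻¹` has integer entries for some
positive diagonal matrix `H`. -/
def QuasiInteger {n : ℕ} (B : Matrix (Fin n) (Fin n) ℝ) : Prop :=
  ∃ h : Fin n → ℝ, (∀ i, 0 < h i) ∧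
    ∀ i j, ∃ m : ℤ,
      (Matrix.diagonal h * B * Matrix.diagonal (fun i => (h i)⁻¹)) i j = (m : ℝ)

/-- `B` is skew-symmetrizable: there is a positive diagonal `D` with `DB` skew-symmetric. -/
def SkewSymmetrizable {n : ℕ} (B : Matrix (Fin n) (Fin n) ℝ) : Prop :=
  ∃ d : Fin n → ℝ, (∀ i, 0 < d i) ∧
    (Matrix.diagonal d * B)ᵀ = -(Matrix.diagonal d * B)

/-- The map `Sk`: `Sk(B)_{ij} = sign(b_ij)·√|b_ij b_ji|`, which equals
`D^{1/2} B D^{-1/2}` for any positive diagonal skew-symmetrizer `D` of `B`. -/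
def Sk {n : ℕ} (B : Matrix (Fin n) (Fin n) ℝ) : Matrix (Fin n) (Fin n) ℝ :=
  fun i j => Real.sign (B i j) * Real.sqrt |B i j * B j i|

lemma conj_apply {n : ℕ} (h g : Fin n → ℝ) (B : Matrix (Fin n) (Fin n) ℝ) (i j : Fin n) :
    (Matrix.diagonal h * B * Matrix.diagonal g) i j = h i * B i j * g j := by
  simp [Matrix.mul_diagonal, Matrix.diagonal_mul]

lemma QI_iff {n : ℕ} (B : Matrix (Fin n) (Fin n) ℝ) :
    QuasiInteger B ↔ ∃ h : Fin n → ℝ, (∀ i, 0 < h i) ∧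
      ∀ i j, ∃ m : ℤ, h i * B i j * (h j)⁻¹ = (m : ℝ) := by
  unfold QuasiInteger
  refine exists_congr fun h => and_congr_right fun _ => ?_
  constructor <;> intro H i j <;> obtain ⟨m, hm⟩ := H i j <;> exact ⟨m, by
    simpa [conj_apply] using hm⟩

lemma skewSym_iff {n : ℕ} (B : Matrix (Fin n) (Fin n) ℝ) :
    SkewSymmetrizable B ↔ ∃ d : Fin n → ℝ, (∀ i, 0 < d i) ∧
      ∀ i j, d j * B j i = -(d i * B i j) := by
  unfold SkewSymmetrizable
  refine exists_congr fun d => and_congr_right fun _ => ?_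
  constructor
  · intro H i j
    have := congrFun (congrFun H i) j
    simpa [Matrix.diagonal_mul] using this
  · intro H
    ext i j
    simpa [Matrix.diagonal_mul] using H i j

lemma sign_mul_abs' (x : ℝ) : Real.sign x * |x| = x := by
  rcases lt_trichotomy x 0 with hx | hx | hx
  · rw [Real.sign_of_neg hx, abs_of_neg hx]; ring
  · simp [hx]
  · rw [Real.sign_of_pos hx, abs_of_pos hx]; ring

lemma sign_pos_mul (a x : ℝ) (ha : 0 < a) : Real.sign (a * x) = Real.sign x := by
  rcases lt_trichotomy x 0 with hx | hx | hx
  · rw [Real.sign_of_neg hx, Real.sign_of_neg (mul_neg_of_pos_of_neg ha hx)]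
  · simp [hx]
  · rw [Real.sign_of_pos hx, Real.sign_of_pos (mul_pos ha hx)]

lemma sk_apply {n : ℕ} (B : Matrix (Fin n) (Fin n) ℝ) (d : Fin n → ℝ)
    (hd : ∀ i, 0 < d i) (hrel : ∀ i j, d j * B j i = -(d i * B i j)) (i j : Fin n) :
    Sk B i j = Real.sqrt (d i) * B i j * (Real.sqrt (d j))⁻¹ := by
  have hdj := hd j
  have hdi := hd i
  have hji : B j i = -(d i * B i j) / d j := by
    field_simp
    linarith [hrel i j]
  have habs : |B i j * B j i| = (d i / d j) * (B i j) ^ 2 := by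
    rw [hji, abs_of_nonpos (by
      have : B i j * (-(d i * B i j) / d j) = -((d i / d j) * (B i j) ^ 2) := by ring
      rw [this]
      have : 0 ≤ (d i / d j) * (B i j) ^ 2 := by positivity
      linarith)]
    ring
  rw [Sk, habs, Real.sqrt_mul (by positivity), Real.sqrt_div hdi.le,
    Real.sqrt_sq_eq_abs]
  rw [show Real.sign (B i j) * (Real.sqrt (d i) / Real.sqrt (d j) * |B i j|)
      = (Real.sign (B i j) * |B i j|) * Real.sqrt (d i) / Real.sqrt (d j) by ring,
    sign_mul_abs']
  ring

lemma QI_conj {n : ℕ} (c : Fin n → ℝ) (B : Matrix (Fin n) (Fin n) ℝ)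
    (hc : ∀ i, 0 < c i) (hB : QuasiInteger B) :
    QuasiInteger (fun i j => c i * B i j * (c j)⁻¹ : Matrix (Fin n) (Fin n) ℝ) := by
  rw [QI_iff] at hB
  refine (QI_iff _).mpr ?_
  obtain ⟨h, hpos, hint⟩ := hB
  refine ⟨fun i => h i * (c i)⁻¹, fun i => mul_pos (hpos i) (inv_pos.mpr (hc i)), fun i j => ?_⟩
  obtain ⟨m, hm⟩ := hint i j
  refine ⟨m, ?_⟩
  rw [← hm]
  have hci := (hc i).ne'
  have hcj := (hc j).ne'
  have hhi := (hpos i).ne'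
  have hhj := (hpos j).ne'
  field_simp

lemma QI_conj_iff {n : ℕ} (c : Fin n → ℝ) (B : Matrix (Fin n) (Fin n) ℝ)
    (hc : ∀ i, 0 < c i) :
    QuasiInteger B ↔ QuasiInteger (fun i j => c i * B i j * (c j)⁻¹ : Matrix (Fin n) (Fin n) ℝ) := by
  constructor
  · exact QI_conj c B hc
  · intro H
    have := QI_conj (fun i => (c i)⁻¹) _ (fun i => inv_pos.mpr (hc i)) H
    have heq : (fun i j => (c i)⁻¹ * (c i * B i j * (c j)⁻¹) * ((c j)⁻¹)⁻¹ :
        Matrix (Fin n) (Fin n) ℝ) = B := by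
      funext i j
      have hci := (hc i).ne'
      have hcj := (hc j).ne'
      field_simp
    rwa [heq] at this

/-- a skew-symmetrizable `B` is of quasi-integer type iff `Sk(B)` is; and the
set of skew-symmetric quasi-integer type matrices is exactly `{Sk(B) : B integer
skew-symmetrizable}`. -/
theorem stmt8 {n : ℕ} :
    (∀ B : Matrix (Fin n) (Fin n) ℝ, SkewSymmetrizable B →
      (QuasiInteger B ↔ QuasiInteger (Sk B))) ∧
    ({S : Matrix (Fin n) (Fin n) ℝ | Sᵀ = -S ∧ QuasiInteger S} =
      {S : Matrix (Fin n) (Fin n) ℝ | ∃ B : Matrix (Fin n) (Fin n) ℝ,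
        (∀ i j, ∃ m : ℤ, B i j = (m : ℝ)) ∧ SkewSymmetrizable B ∧ S = Sk B}) := by
  have part1 : ∀ B : Matrix (Fin n) (Fin n) ℝ, SkewSymmetrizable B →
      (QuasiInteger B ↔ QuasiInteger (Sk B)) := by
    intro B hB
    rw [skewSym_iff] at hB
    obtain ⟨d, hd, hrel⟩ := hB
    have hsk : Sk B = (fun i j => Real.sqrt (d i) * B i j * (Real.sqrt (d j))⁻¹ :
        Matrix (Fin n) (Fin n) ℝ) := by
      funext i j
      exact sk_apply B d hd hrel i j
    rw [hsk]
    exact QI_conj_iff _ B (fun i => Real.sqrt_pos.mpr (hd i))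
  refine ⟨part1, ?_⟩
  ext S
  simp only [Set.mem_setOf_eq]
  constructor
  · rintro ⟨hskew, hQI⟩
    rw [QI_iff] at hQI
    obtain ⟨h, hpos, hint⟩ := hQI
    have hS' : ∀ i j, S j i = -S i j := fun i j => by
      have := congrFun (congrFun hskew i) j
      simpa using this
    refine ⟨(fun i j => h i * S i j * (h j)⁻¹ : Matrix (Fin n) (Fin n) ℝ), hint, ?_, ?_⟩
    · refine (skewSym_iff _).mpr ?_
      refine ⟨fun i => ((h i) ^ 2)⁻¹, fun i => inv_pos.mpr (pow_pos (hpos i) 2), fun i j => ?_⟩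
      have hi := (hpos i).ne'
      have hj := (hpos j).ne'
      rw [hS' i j]
      field_simp
    · funext i j
      have hi := (hpos i).ne'
      have hj := (hpos j).ne'
      have hBij : (h i * S i j * (h j)⁻¹) * (h j * S j i * (h i)⁻¹) = -(S i j) ^ 2 := by
        rw [hS' i j]
        field_simp
      show S i j = Real.sign (h i * S i j * (h j)⁻¹) * Real.sqrt |_|
      rw [hBij]
      rw [show h i * S i j * (h j)⁻¹ = (h i * (h j)⁻¹) * S i j by ring,
        sign_pos_mul _ _ (mul_pos (hpos i) (inv_pos.mpr (hpos j)))]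
      rw [abs_neg, abs_sq, Real.sqrt_sq_eq_abs, sign_mul_abs']
  · rintro ⟨B, hBint, hBss, rfl⟩
    obtain ⟨d, hd, hrel⟩ := (skewSym_iff B).mp hBss
    constructor
    · ext i j
      rw [Matrix.transpose_apply, Matrix.neg_apply,
        sk_apply B d hd hrel j i, sk_apply B d hd hrel i j]
      have hdj0 : d j ≠ 0 := (hd j).ne'
      have hji : B j i = -(d i * B i j) / d j := by
        field_simp
        linarith [hrel i j]
      have hsi : Real.sqrt (d i) ≠ 0 := (Real.sqrt_pos.mpr (hd i)).ne'
      have hsj : Real.sqrt (d j) ≠ 0 := (Real.sqrt_pos.mpr (hd j)).ne'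
      have hdi : d i = Real.sqrt (d i) ^ 2 := (Real.sq_sqrt (hd i).le).symm
      have hdj : d j = Real.sqrt (d j) ^ 2 := (Real.sq_sqrt (hd j).le).symm
      rw [hji, hdi, hdj]
      field_simp
      simp only [Real.sqrt_sq, Real.sqrt_nonneg]
      ring
    · have hQIB : QuasiInteger B := by
        rw [QI_iff]
        refine ⟨fun _ => 1, fun _ => one_pos, fun i j => ?_⟩
        obtain ⟨m, hm⟩ := hBint i j
        exact ⟨m, by rw [hm]; norm_num⟩
      exact (part1 B hBss).mp hQIB


end
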